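/- Let f : E → ℝ be differentiable, convex, and L-smooth with L > 0, let x* ∈ E be a global minimizer of f, and let x : ℕ → E be the gradient descent sequence with constant step size λ = 1/L starting from x_0. Then for any ε > 0 and any natural number n ≥ 1 with n ≥ L·‖x_0 - x*‖²/(2ε), one has f(x_n) - f(x*) ≤ ε. -/

import Mathlib

open RealInnerProductSpace
open Set

section aux
variable {E : Type*} [NormedAddCommGroup E] [InnerProductSpace ℝ E] [CompleteSpace E]

/-- derivative of t ↦ f (a + t • v) -/
lemma line_hasDerivAt (f : E → ℝ) (f' : E → E) (hdiff : ∀ x, HasGradientAt f (f' x) x)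
    (a v : E) (t : ℝ) :
    HasDerivAt (fun s : ℝ => f (a + s • v)) ⟪f' (a + t • v), v⟫ t := by
  have hc : HasDerivAt (fun s : ℝ => a + s • v) v t :=
    by simpa using ((hasDerivAt_id t).smul_const v).const_add a
  have hf := (hdiff (a + t • v)).hasFDerivAt
  have := hf.comp_hasDerivAt t hc
  simpa [Function.comp_def] using this

/-- descent lemma -/
lemma descent_lemma (f : E → ℝ) (f' : E → E) (L : ℝ) (hL : 0 < L)
    (hdiff : ∀ x, HasGradientAt f (f' x) x)
    (hsmooth : ∀ x y, ‖f' x - f' y‖ ≤ L * ‖x - y‖)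
    (a v : E) : f (a + v) ≤ f a + ⟪f' a, v⟫ + L / 2 * ‖v‖ ^ 2 := by
  set g : ℝ → ℝ := fun t => f (a + t • v) - t * ⟪f' a, v⟫ - L / 2 * t ^ 2 * ‖v‖ ^ 2 with hg
  have hgd : ∀ t : ℝ, HasDerivAt g (⟪f' (a + t • v), v⟫ - ⟪f' a, v⟫ - L * t * ‖v‖ ^ 2) t := by
    intro t
    have h1 := line_hasDerivAt f f' hdiff a v t
    have h2 : HasDerivAt (fun s : ℝ => s * ⟪f' a, v⟫) ⟪f' a, v⟫ t := by
      simpa using (hasDerivAt_id t).mul_const ⟪f' a, v⟫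
    have h3 : HasDerivAt (fun s : ℝ => L / 2 * s ^ 2 * ‖v‖ ^ 2) (L * t * ‖v‖ ^ 2) t := by
      have := ((hasDerivAt_pow 2 t).const_mul (L / 2)).mul_const (‖v‖ ^ 2)
      refine this.congr_deriv ?_
      rw [show (2:ℕ) - 1 = 1 from rfl, pow_one]
      push_cast
      ring
    exact (h1.sub h2).sub h3
  have hmono : AntitoneOn g (Icc 0 1) := by
    apply antitoneOn_of_deriv_nonpos (convex_Icc 0 1)
    · exact fun t _ => (hgd t).continuousAt.continuousWithinAt
    · exact fun t _ => ((hgd t).differentiableAt).differentiableWithinAt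
    · intro t ht
      rw [interior_Icc] at ht
      rw [(hgd t).deriv]
      have hb : ⟪f' (a + t • v) - f' a, v⟫ ≤ L * t * ‖v‖ ^ 2 := by
        calc ⟪f' (a + t • v) - f' a, v⟫ ≤ ‖f' (a + t • v) - f' a‖ * ‖v‖ :=
              real_inner_le_norm _ _
          _ ≤ (L * ‖(a + t • v) - a‖) * ‖v‖ := by
              gcongr; exact hsmooth _ _
          _ = L * t * ‖v‖ ^ 2 := by
              rw [add_sub_cancel_left, norm_smul, Real.norm_eq_abs,
                abs_of_pos ht.1]; ring
      have hsub : ⟪f' (a + t • v) - f' a, v⟫ = ⟪f' (a + t • v), v⟫ - ⟪f' a, v⟫ :=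
        inner_sub_left _ _ _
      linarith
  have h01 := hmono (by norm_num : (0:ℝ) ∈ Icc (0:ℝ) 1) (by norm_num : (1:ℝ) ∈ Icc (0:ℝ) 1) zero_le_one
  simp only [hg, zero_smul, add_zero, one_smul, zero_mul, zero_pow, mul_zero, sub_zero,
    one_pow, mul_one, one_mul] at h01
  linarith

/-- convexity lower bound -/
lemma convex_lb (f : E → ℝ) (f' : E → E) (hdiff : ∀ x, HasGradientAt f (f' x) x)
    (hconv : ConvexOn ℝ Set.univ f) (a y : E) :
    f a + ⟪f' a, y - a⟫ ≤ f y := by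
  have hφ : ConvexOn ℝ Set.univ (fun t : ℝ => f (a + t • (y - a))) := by
    have h := hconv.comp_affineMap (AffineMap.lineMap a y : ℝ →ᵃ[ℝ] E)
    have he : (fun t : ℝ => f (a + t • (y - a))) = f ∘ (AffineMap.lineMap a y : ℝ →ᵃ[ℝ] E) := by
      funext t
      simp [AffineMap.lineMap_apply, add_comm]
    rw [he]
    simpa using h
  have hd := line_hasDerivAt f f' hdiff a (y - a) 0
  simp only [zero_smul, add_zero] at hd
  have := hφ.le_slope_of_hasDerivAt (mem_univ (0:ℝ)) (mem_univ (1:ℝ)) zero_lt_one hd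
  rw [slope_def_field] at this
  simp at this
  linarith

end aux


theorem gd_convex_eps_complexity {E : Type*} [NormedAddCommGroup E] [InnerProductSpace ℝ E]
    [CompleteSpace E]
    (f : E → ℝ) (f' : E → E) (L : ℝ) (hL : 0 < L)
    (hdiff : ∀ x, HasGradientAt f (f' x) x)
    (hconv : ConvexOn ℝ Set.univ f)
    (hsmooth : ∀ x y, ‖f' x - f' y‖ ≤ L * ‖x - y‖)
    (xstar : E) (hmin : ∀ y, f xstar ≤ f y)
    (x : ℕ → E)
    (hiter : ∀ k, x (k + 1) = x k - (1 / L) • f' (x k)) :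
    ∀ ε : ℝ, 0 < ε → ∀ n : ℕ, 1 ≤ n →
      L * ‖x 0 - xstar‖ ^ 2 / (2 * ε) ≤ (n : ℝ) →
      f (x n) - f xstar ≤ ε := by
  have hL' : L ≠ 0 := ne_of_gt hL
  -- per-step descent with explicit bound
  have hstepv : ∀ k, x (k + 1) = x k + (-(1 / L)) • f' (x k) := by
    intro k; rw [hiter k]; module
  have hdesc : ∀ k, f (x (k + 1)) ≤ f (x k) - (1 / (2 * L)) * ‖f' (x k)‖ ^ 2 := by
    intro k
    have h := descent_lemma f f' L hL hdiff hsmooth (x k) ((-(1 / L)) • f' (x k))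
    rw [← hstepv k] at h
    have e1 : ⟪f' (x k), (-(1 / L)) • f' (x k)⟫ = -(1 / L) * ‖f' (x k)‖ ^ 2 := by
      rw [real_inner_smul_right, real_inner_self_eq_norm_sq]
    have e2 : ‖(-(1 / L)) • f' (x k)‖ ^ 2 = (1 / L) ^ 2 * ‖f' (x k)‖ ^ 2 := by
      rw [norm_smul]; simp [mul_pow]
    rw [e1, e2] at h
    have : -(1 / L) * ‖f' (x k)‖ ^ 2 + L / 2 * ((1 / L) ^ 2 * ‖f' (x k)‖ ^ 2)
        = -(1 / (2 * L)) * ‖f' (x k)‖ ^ 2 := by field_simp; ring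
    linarith
  have hdec : ∀ k, f (x (k + 1)) ≤ f (x k) := by
    intro k
    have hG : 0 ≤ ‖f' (x k)‖ ^ 2 := sq_nonneg _
    have : 0 ≤ (1 / (2 * L)) * ‖f' (x k)‖ ^ 2 := by positivity
    linarith [hdesc k]
  have hanti : Antitone (fun k => f (x k)) := antitone_nat_of_succ_le hdec
  -- per-step telescoping bound
  have hstep : ∀ k, f (x (k + 1)) - f xstar ≤
      L / 2 * ‖x k - xstar‖ ^ 2 - L / 2 * ‖x (k + 1) - xstar‖ ^ 2 := by
    intro k
    have hcv := convex_lb f f' hdiff hconv (x k) xstar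
    have e3 : ⟪f' (x k), xstar - x k⟫ = -⟪f' (x k), x k - xstar⟫ := by
      rw [← inner_neg_right]; congr 1; abel
    rw [e3] at hcv
    have hnorm : ‖x (k + 1) - xstar‖ ^ 2 = ‖x k - xstar‖ ^ 2
        + 2 * (-(1 / L) * ⟪f' (x k), x k - xstar⟫) + (1 / L) ^ 2 * ‖f' (x k)‖ ^ 2 := by
      have : x (k + 1) - xstar = (x k - xstar) + (-(1 / L)) • f' (x k) := by
        rw [hstepv k]; abel
      rw [this, norm_add_sq_real, real_inner_smul_right, real_inner_comm, norm_smul]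
      simp only [mul_pow, neg_mul, norm_neg, Real.norm_eq_abs, abs_of_pos (by positivity : (0:ℝ) < 1/L), sq_abs]
    have key : L / 2 * ‖x k - xstar‖ ^ 2 - L / 2 * ‖x (k + 1) - xstar‖ ^ 2
        = ⟪f' (x k), x k - xstar⟫ - 1 / (2 * L) * ‖f' (x k)‖ ^ 2 := by
      rw [hnorm]; field_simp; ring
    rw [key]
    linarith [hdesc k]
  intro ε hε n hn hN
  obtain ⟨C, hC⟩ : ∃ C : ℝ, ‖x 0 - xstar‖ ^ 2 = C := ⟨_, rfl⟩
  obtain ⟨D, hD⟩ : ∃ D : ℝ, f (x n) - f xstar = D := ⟨_, rfl⟩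
  rw [hC] at hN
  rw [hD]
  have hCpos : 0 ≤ C := hC ▸ sq_nonneg _
  have hsum : (n : ℝ) * D ≤ L / 2 * C := by
    have h1 : (n : ℝ) * D = ∑ _k ∈ Finset.range n, D := by
      rw [Finset.sum_const, Finset.card_range, nsmul_eq_mul]
    have h2 : ∑ _k ∈ Finset.range n, D ≤
        ∑ k ∈ Finset.range n, (f (x (k + 1)) - f xstar) := by
      apply Finset.sum_le_sum
      intro k hk
      have : f (x n) ≤ f (x (k + 1)) := hanti (Finset.mem_range.mp hk)
      linarith [hD]
    have h3 : ∑ k ∈ Finset.range n, (f (x (k + 1)) - f xstar) ≤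
        ∑ k ∈ Finset.range n,
          (L / 2 * ‖x k - xstar‖ ^ 2 - L / 2 * ‖x (k + 1) - xstar‖ ^ 2) := by
      exact Finset.sum_le_sum fun k _ => hstep k
    have h4 : ∑ k ∈ Finset.range n,
          (L / 2 * ‖x k - xstar‖ ^ 2 - L / 2 * ‖x (k + 1) - xstar‖ ^ 2)
        = L / 2 * C - L / 2 * ‖x n - xstar‖ ^ 2 := by
      have := Finset.sum_range_sub' (fun k => L / 2 * ‖x k - xstar‖ ^ 2) n
      rw [hC] at this
      exact this
    have h5 : 0 ≤ L / 2 * ‖x n - xstar‖ ^ 2 := by positivity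
    linarith
  have hnpos : (0 : ℝ) < n := by exact_mod_cast hn
  have hLC : L * C ≤ 2 * ε * n := by
    have := hN
    rw [div_le_iff₀ (by positivity)] at this
    linarith
  have : (n : ℝ) * D ≤ ε * n := by linarith
  calc D ≤ ε * n / n := by rw [le_div_iff₀ hnpos]; linarith
    _ = ε := by field_simp
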